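/- arXiv:2504.18368 — 3 statements merged into one kernel-verified Lean document; each statement's English description precedes it below -/
import Mathlib

section
/- In the single-period profit maximization with no export (P_EX = 0), if the LMP satisfies π ≤ π̲ := γ(π_H+τ_H−c_W) − τ_IM, then the choice P_H = Q_H, P_IM = max(Q_H − ηQ_R, 0) maximizes the objective (π_H+τ_H−c_W)·γ·P_H − (π+τ_IM)·P_IM over all feasible (P_H, P_IM) with 0 ≤ P_H − P_IM ≤ ηQ_R, 0 ≤ P_H ≤ Q_H, 0 ≤ P_IM ≤ Q_H, provided π + τ_IM ≥ 0. -/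
theorem no_export_low_price_optimal
    (QR QH η π πH τH cW τIM γ : ℝ)
    (hQR : 0 ≤ QR) (hQH : 0 ≤ QH) (hη0 : 0 ≤ η) (hη1 : η ≤ 1)
    (hγ : 0 < γ) (hmargin : 0 ≤ πH + τH - cW)
    (hcost : 0 ≤ π + τIM)
    (hπ : π ≤ γ * (πH + τH - cW) - τIM) :
    ∀ PH PIM : ℝ,
      0 ≤ PH → PH ≤ QH → 0 ≤ PIM → PIM ≤ QH →
      0 ≤ PH - PIM → PH - PIM ≤ η * QR →
      (πH + τH - cW) * γ * PH - (π + τIM) * PIM ≤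
        (πH + τH - cW) * γ * QH - (π + τIM) * (max (QH - η * QR) 0) := by
  intro PH PIM h1 h2 h3 h4 h5 h6
  rcases le_total (QH - η * QR) 0 with h | h
  · rw [max_eq_right h]
    nlinarith [mul_nonneg hcost h3, mul_nonneg (mul_nonneg hmargin hγ.le) (sub_nonneg.2 h2)]
  · rw [max_eq_left h]
    nlinarith [mul_nonneg (sub_nonneg.2 hπ) (sub_nonneg.2 h2), mul_nonneg hcost h5]
end

section
/- In the net-zero region: if −τ_IM < π, Q_H ≤ ηQ_R, and π ≤ −τ_EX, then the no-export optimum and the no-import optimum coincide at P_H = Q_H with P_IM = P_EX = 0, and both achieve the same objective value γ(π_H+τ_H−c_W)Q_H; in particular the optimal prosumer production equals Q_H with zero grid exchange. -/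
theorem net_zero_region_optimal
    (QR QH η π πH τH cW τIM τEX γ : ℝ)
    (hQR : 0 ≤ QR) (hQH : 0 ≤ QH) (hη0 : 0 ≤ η) (hη1 : η ≤ 1)
    (hγ : 0 < γ) (hmargin : 0 ≤ πH + τH - cW)
    (hREC : τIM > τEX) (hEX : 0 ≤ τEX)
    (hπlo : -τIM < π) (hπhi : π ≤ -τEX)
    (hcap : QH ≤ η * QR) :
    (∀ PH PIM : ℝ,
      0 ≤ PH → PH ≤ QH → 0 ≤ PIM → PIM ≤ QH →
      0 ≤ PH - PIM → PH - PIM ≤ η * QR →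
      γ * (πH + τH - cW) * PH - (π + τIM) * PIM ≤
        γ * (πH + τH - cW) * QH) ∧
    (∀ PH PEX : ℝ,
      0 ≤ PH → PH ≤ QH → 0 ≤ PEX → PEX ≤ η * QR →
      PH + PEX ≤ η * QR →
      γ * (πH + τH - cW) * PH + (π + τEX) * PEX ≤
        γ * (πH + τH - cW) * QH) ∧
    γ * (πH + τH - cW) * QH - (π + τIM) * 0 = γ * (πH + τH - cW) * QH ∧
    γ * (πH + τH - cW) * QH + (π + τEX) * 0 = γ * (πH + τH - cW) * QH := by
  have hm : 0 ≤ γ * (πH + τH - cW) := mul_nonneg hγ.le hmargin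
  refine ⟨?_, ?_, by ring, by ring⟩
  · intro PH PIM h1 h2 h3 h4 h5 h6
    have : γ * (πH + τH - cW) * PH ≤ γ * (πH + τH - cW) * QH :=
      mul_le_mul_of_nonneg_left h2 hm
    nlinarith [mul_nonneg (by linarith : (0:ℝ) ≤ π + τIM) h3]
  · intro PH PEX h1 h2 h3 h4 h5
    have : γ * (πH + τH - cW) * PH ≤ γ * (πH + τH - cW) * QH :=
      mul_le_mul_of_nonneg_left h2 hm
    nlinarith [mul_nonneg (by linarith : (0:ℝ) ≤ -(π + τEX)) h3]
end

section
/- The one-sided difference satisfies: for 0 ≤ κ₁ ≤ κ₂, g(κ₂) − g(κ₁) = ∫∫_{κ₁<η≤κ₂} [(π̲ − π)1{0≤π≤π̲} − (π̄ − π)1{0≤π≤π̄}] dρ ≤ −∫∫_{κ₁<η≤κ₂, 0≤π≤π̲} (π̄ − π̲) dρ − ∫∫_{κ₁<η≤κ₂, π̲<π≤π̄} (π̄ − π) dρ ≤ 0, where both integrands are nonnegative; hence the marginal value of electrolyzer capacity decreases by at least the mass-weighted REC price gap. -/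
open MeasureTheory

private lemma bdd_integrable {ρ : Measure (ℝ × ℝ)} [IsFiniteMeasure ρ]
    {f : ℝ × ℝ → ℝ} {c : ℝ} (hm : Measurable f) (hb : ∀ p, |f p| ≤ c) :
    Integrable f ρ := by
  refine (integrable_const c).mono' hm.aestronglyMeasurable (Filter.Eventually.of_forall fun p => ?_)
  simpa using hb p

theorem marginal_value_difference
    (ρ : Measure (ℝ × ℝ)) [IsFiniteMeasure ρ]
    (πl πu : ℝ) (hl : 0 < πl) (hlu : πl < πu)
    (g : ℝ → ℝ)
    (hg : ∀ κ : ℝ, g κ =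
      (∫ p, (if 0 ≤ p.1 ∧ p.1 ≤ πl ∧ p.2 ≤ κ then πl - p.1 else 0) ∂ρ) +
      (∫ p, (if 0 ≤ p.1 ∧ p.1 ≤ πu ∧ κ < p.2 then πu - p.1 else 0) ∂ρ)) :
    ∀ κ₁ κ₂ : ℝ, 0 ≤ κ₁ → κ₁ ≤ κ₂ →
      (g κ₂ - g κ₁ =
        ∫ p, (if κ₁ < p.2 ∧ p.2 ≤ κ₂ then
          (if 0 ≤ p.1 ∧ p.1 ≤ πl then πl - p.1 else 0)
            - (if 0 ≤ p.1 ∧ p.1 ≤ πu then πu - p.1 else 0) else 0) ∂ρ) ∧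
      (g κ₂ - g κ₁ ≤
        -(∫ p, (if κ₁ < p.2 ∧ p.2 ≤ κ₂ ∧ 0 ≤ p.1 ∧ p.1 ≤ πl
            then πu - πl else 0) ∂ρ)
        - (∫ p, (if κ₁ < p.2 ∧ p.2 ≤ κ₂ ∧ πl < p.1 ∧ p.1 ≤ πu
            then πu - p.1 else 0) ∂ρ)) ∧
      g κ₂ - g κ₁ ≤ 0 := by
  intro κ₁ κ₂ hκ₁ hκ
  -- integrability facts
  have intFl : ∀ κ : ℝ, Integrable
      (fun p : ℝ × ℝ => if 0 ≤ p.1 ∧ p.1 ≤ πl ∧ p.2 ≤ κ then πl - p.1 else 0) ρ := by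
    intro κ
    refine bdd_integrable (c := πl) ?_ ?_
    · exact Measurable.ite
        ((measurableSet_le measurable_const measurable_fst).inter
          ((measurableSet_le measurable_fst measurable_const).inter
            (measurableSet_le measurable_snd measurable_const)))
        (measurable_const.sub measurable_fst) measurable_const
    · intro p
      by_cases h : 0 ≤ p.1 ∧ p.1 ≤ πl ∧ p.2 ≤ κ
      · rw [if_pos h]
        obtain ⟨h1, h2, _⟩ := h
        rw [abs_le]; constructor <;> linarith
      · rw [if_neg h]
        simpa using hl.le
  have intFu : ∀ κ : ℝ, Integrable
      (fun p : ℝ × ℝ => if 0 ≤ p.1 ∧ p.1 ≤ πu ∧ κ < p.2 then πu - p.1 else 0) ρ := by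
    intro κ
    refine bdd_integrable (c := πu) ?_ ?_
    · exact Measurable.ite
        ((measurableSet_le measurable_const measurable_fst).inter
          ((measurableSet_le measurable_fst measurable_const).inter
            (measurableSet_lt measurable_const measurable_snd)))
        (measurable_const.sub measurable_fst) measurable_const
    · intro p
      by_cases h : 0 ≤ p.1 ∧ p.1 ≤ πu ∧ κ < p.2
      · rw [if_pos h]
        obtain ⟨h1, h2, _⟩ := h
        rw [abs_le]; constructor <;> linarith
      · rw [if_neg h]
        simpa using (hl.trans hlu).le
  have intA : Integrable
      (fun p : ℝ × ℝ => if κ₁ < p.2 ∧ p.2 ≤ κ₂ ∧ 0 ≤ p.1 ∧ p.1 ≤ πl then πu - πl else 0) ρ := by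
    refine bdd_integrable (c := πu - πl) ?_ ?_
    · exact Measurable.ite
        ((measurableSet_lt measurable_const measurable_snd).inter
          ((measurableSet_le measurable_snd measurable_const).inter
            ((measurableSet_le measurable_const measurable_fst).inter
              (measurableSet_le measurable_fst measurable_const))))
        measurable_const measurable_const
    · intro p
      by_cases h : κ₁ < p.2 ∧ p.2 ≤ κ₂ ∧ 0 ≤ p.1 ∧ p.1 ≤ πl
      · rw [if_pos h, abs_of_nonneg (by linarith : (0:ℝ) ≤ πu - πl)]
      · rw [if_neg h]
        simpa using by linarith
  have intB : Integrable
      (fun p : ℝ × ℝ => if κ₁ < p.2 ∧ p.2 ≤ κ₂ ∧ πl < p.1 ∧ p.1 ≤ πu then πu - p.1 else 0) ρ := by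
    refine bdd_integrable (c := πu) ?_ ?_
    · exact Measurable.ite
        ((measurableSet_lt measurable_const measurable_snd).inter
          ((measurableSet_le measurable_snd measurable_const).inter
            ((measurableSet_lt measurable_const measurable_fst).inter
              (measurableSet_le measurable_fst measurable_const))))
        (measurable_const.sub measurable_fst) measurable_const
    · intro p
      by_cases h : κ₁ < p.2 ∧ p.2 ≤ κ₂ ∧ πl < p.1 ∧ p.1 ≤ πu
      · rw [if_pos h]
        obtain ⟨_, _, h3, h4⟩ := h
        rw [abs_le]; constructor <;> linarith
      · rw [if_neg h]
        simpa using (hl.trans hlu).le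
  -- pointwise identity for the first equality
  have key : ∀ p : ℝ × ℝ,
      ((if 0 ≤ p.1 ∧ p.1 ≤ πl ∧ p.2 ≤ κ₂ then πl - p.1 else 0) +
        (if 0 ≤ p.1 ∧ p.1 ≤ πu ∧ κ₂ < p.2 then πu - p.1 else 0)) -
      ((if 0 ≤ p.1 ∧ p.1 ≤ πl ∧ p.2 ≤ κ₁ then πl - p.1 else 0) +
        (if 0 ≤ p.1 ∧ p.1 ≤ πu ∧ κ₁ < p.2 then πu - p.1 else 0)) =
      (if κ₁ < p.2 ∧ p.2 ≤ κ₂ then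
        (if 0 ≤ p.1 ∧ p.1 ≤ πl then πl - p.1 else 0)
          - (if 0 ≤ p.1 ∧ p.1 ≤ πu then πu - p.1 else 0) else 0) := by
    intro p
    by_cases hA : κ₁ < p.2
    · by_cases hB : p.2 ≤ κ₂
      · simp only [hA, hB, not_le.mpr hA, not_lt.mpr hB, and_true, and_false, if_false,
          true_and, if_true]
        try ring
      · have hB' : κ₂ < p.2 := not_le.mp hB
        simp [hA, hB, hB', not_le.mpr hA, not_le.mpr hB']
    · have h1 : p.2 ≤ κ₁ := not_lt.mp hA
      have h2 : p.2 ≤ κ₂ := h1.trans hκ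
      simp [hA, h1, h2, not_lt.mpr h2, not_lt.mpr h1]
  -- pointwise identity for the second inequality (in fact equality)
  have key2 : ∀ p : ℝ × ℝ,
      (if κ₁ < p.2 ∧ p.2 ≤ κ₂ then
        (if 0 ≤ p.1 ∧ p.1 ≤ πl then πl - p.1 else 0)
          - (if 0 ≤ p.1 ∧ p.1 ≤ πu then πu - p.1 else 0) else 0) =
      -(if κ₁ < p.2 ∧ p.2 ≤ κ₂ ∧ 0 ≤ p.1 ∧ p.1 ≤ πl then πu - πl else 0)
        - (if κ₁ < p.2 ∧ p.2 ≤ κ₂ ∧ πl < p.1 ∧ p.1 ≤ πu then πu - p.1 else 0) := by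
    intro p
    by_cases hS : κ₁ < p.2 ∧ p.2 ≤ κ₂
    · obtain ⟨hS1, hS2⟩ := hS
      by_cases hC : 0 ≤ p.1
      · by_cases hD : p.1 ≤ πl
        · have hE : p.1 ≤ πu := hD.trans hlu.le
          simp only [hS1, hS2, hC, hD, hE, not_lt.mpr hD, and_true, true_and, and_false,
            if_false, if_true]
          try ring
        · have hD' : πl < p.1 := not_le.mp hD
          by_cases hE : p.1 ≤ πu
          · simp [hS1, hS2, hC, hD, hD', hE]
          · simp [hS1, hS2, hC, hD, hD', hE]
      · have hD' : ¬(πl < p.1 ∧ p.1 ≤ πu) := fun h => hC (le_of_lt (hl.trans h.1))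
        simp [hS1, hS2, hC, hD']
    · simp only [hS, if_false]
      rw [not_and_or] at hS
      rcases hS with h | h <;> simp [h]
  -- first equality
  have eq1 : g κ₂ - g κ₁ =
      ∫ p, (if κ₁ < p.2 ∧ p.2 ≤ κ₂ then
        (if 0 ≤ p.1 ∧ p.1 ≤ πl then πl - p.1 else 0)
          - (if 0 ≤ p.1 ∧ p.1 ≤ πu then πu - p.1 else 0) else 0) ∂ρ := by
    have iadd : ∀ κ : ℝ, Integrable (fun p : ℝ × ℝ =>
        (if 0 ≤ p.1 ∧ p.1 ≤ πl ∧ p.2 ≤ κ then πl - p.1 else 0) +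
        (if 0 ≤ p.1 ∧ p.1 ≤ πu ∧ κ < p.2 then πu - p.1 else 0)) ρ :=
      fun κ => (intFl κ).add (intFu κ)
    rw [hg κ₂, hg κ₁, ← integral_add (intFl κ₂) (intFu κ₂),
      ← integral_add (intFl κ₁) (intFu κ₁),
      ← integral_sub (iadd κ₂) (iadd κ₁)]
    exact integral_congr_ae (Filter.Eventually.of_forall key)
  have eq2 :
      (∫ p, (if κ₁ < p.2 ∧ p.2 ≤ κ₂ then
        (if 0 ≤ p.1 ∧ p.1 ≤ πl then πl - p.1 else 0)
          - (if 0 ≤ p.1 ∧ p.1 ≤ πu then πu - p.1 else 0) else 0) ∂ρ) =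
      -(∫ p, (if κ₁ < p.2 ∧ p.2 ≤ κ₂ ∧ 0 ≤ p.1 ∧ p.1 ≤ πl then πu - πl else 0) ∂ρ)
        - (∫ p, (if κ₁ < p.2 ∧ p.2 ≤ κ₂ ∧ πl < p.1 ∧ p.1 ≤ πu then πu - p.1 else 0) ∂ρ) := by
    rw [integral_congr_ae (Filter.Eventually.of_forall key2)]
    have step : (∫ p, ((-if κ₁ < p.2 ∧ p.2 ≤ κ₂ ∧ 0 ≤ p.1 ∧ p.1 ≤ πl then πu - πl else 0)
        - if κ₁ < p.2 ∧ p.2 ≤ κ₂ ∧ πl < p.1 ∧ p.1 ≤ πu then πu - p.1 else 0) ∂ρ)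
        = -∫ p, ((if κ₁ < p.2 ∧ p.2 ≤ κ₂ ∧ 0 ≤ p.1 ∧ p.1 ≤ πl then πu - πl else 0)
        + if κ₁ < p.2 ∧ p.2 ≤ κ₂ ∧ πl < p.1 ∧ p.1 ≤ πu then πu - p.1 else 0) ∂ρ := by
      rw [← integral_neg]
      exact integral_congr_ae (Filter.Eventually.of_forall fun p => by ring)
    rw [step, integral_add intA intB]
    ring
  have hA0 : 0 ≤ ∫ p, (if κ₁ < p.2 ∧ p.2 ≤ κ₂ ∧ 0 ≤ p.1 ∧ p.1 ≤ πl then πu - πl else 0) ∂ρ := by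
    refine integral_nonneg fun p => ?_
    simp only [Pi.zero_apply]
    split_ifs with h
    · linarith
    · exact le_refl 0
  have hB0 : 0 ≤ ∫ p, (if κ₁ < p.2 ∧ p.2 ≤ κ₂ ∧ πl < p.1 ∧ p.1 ≤ πu then πu - p.1 else 0) ∂ρ := by
    refine integral_nonneg fun p => ?_
    simp only [Pi.zero_apply]
    split_ifs with h
    · linarith [h.2.2.2]
    · exact le_refl 0
  refine ⟨eq1, ?_, ?_⟩
  · rw [eq1, eq2]
  · rw [eq1, eq2]; linarith
end
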